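/- Suppose Adaptive Beam Search with parameter γ = 2 is run on a navigable graph G under a metric d with a query q, and terminates returning a set B of k nodes. Then B is exactly the set of k nearest neighbors of q among all nodes: every node v ∉ B satisfies d(q,v) ≥ max_{j ∈ B} d(q,j). -/

import Mathlib

open Classical in
/-- Pop from the candidate set `C` an element minimizing `f` (distance to the query). -/
noncomputable def pickMin {n : ℕ} (f : Fin n → ℝ) (C : Finset (Fin n))
    (hC : C.Nonempty) : Fin n :=
  (C.exists_min_image f hC).choose

open Classical in
/-- Adaptive Beam Search with parameter `γ` and target `k`: repeatedly pop the closest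
candidate `x`; terminate returning the discovered set `D` if there are `k` discovered
nodes `j` with `(1+γ)·f j ≤ f x`, otherwise expand `x`. -/
noncomputable def absRun {n : ℕ} (N : Fin n → Finset (Fin n)) (f : Fin n → ℝ)
    (k : ℕ) (γ : ℝ) : ℕ → Finset (Fin n) → Finset (Fin n) → Finset (Fin n)
  | 0, D, _ => D
  | (fuel + 1), D, C =>
    if hC : C.Nonempty then
      let x := pickMin f C hC
      if (∃ S : Finset (Fin n), S ⊆ D ∧ S.card = k ∧
            ∀ j ∈ S, (1 + γ) * f j ≤ f x) then D
      else absRun N f k γ fuel (D ∪ N x) ((C.erase x) ∪ (N x \ D))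
    else D

lemma pickMin_spec {n : ℕ} (f : Fin n → ℝ) (C : Finset (Fin n)) (hC : C.Nonempty) :
    pickMin f C hC ∈ C ∧ ∀ y ∈ C, f (pickMin f C hC) ≤ f y :=
  (C.exists_min_image f hC).choose_spec

open Classical in
lemma absRun_succ {n : ℕ} (N : Fin n → Finset (Fin n)) (f : Fin n → ℝ)
    (k : ℕ) (γ : ℝ) (fuel : ℕ) (D C : Finset (Fin n)) :
    absRun N f k γ (fuel + 1) D C =
    if hC : C.Nonempty then
      if (∃ S : Finset (Fin n), S ⊆ D ∧ S.card = k ∧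
            ∀ j ∈ S, (1 + γ) * f j ≤ f (pickMin f C hC)) then D
      else absRun N f k γ fuel (D ∪ N (pickMin f C hC))
        ((C.erase (pickMin f C hC)) ∪ (N (pickMin f C hC) \ D))
    else D := rfl

/-- If every discovered-but-unexpanded node lies in `C` (i.e. expanded nodes' neighbors
are all discovered), any undiscovered `v` has a node in `C` that is closest to it in `D`. -/
lemma closest_in_C {X : Type*} [MetricSpace X] {n : ℕ} (p : Fin n → X)
    (N : Fin n → Finset (Fin n))
    (hnav : ∀ x y : Fin n, x ≠ y → ∃ z ∈ N x, dist (p z) (p y) < dist (p x) (p y))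
    {D C : Finset (Fin n)} (hD : D.Nonempty)
    (hclosed : ∀ u ∈ D, u ∉ C → ∀ z ∈ N u, z ∈ D)
    (v : Fin n) (hv : v ∉ D) :
    ∃ u ∈ C, ∀ j ∈ D, dist (p u) (p v) ≤ dist (p j) (p v) := by
  obtain ⟨u, hu, hmin⟩ := D.exists_min_image (fun j => dist (p j) (p v)) hD
  by_cases huC : u ∈ C
  · exact ⟨u, huC, hmin⟩
  · obtain ⟨z, hz, hlt⟩ := hnav u v (by rintro rfl; exact hv hu)
    have hzD : z ∈ D := hclosed u hu huC z hz
    have := hmin z hzD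
    linarith

lemma closed_univ {X : Type*} [MetricSpace X] {n : ℕ} (p : Fin n → X)
    (N : Fin n → Finset (Fin n))
    (hnav : ∀ x y : Fin n, x ≠ y → ∃ z ∈ N x, dist (p z) (p y) < dist (p x) (p y))
    {D : Finset (Fin n)} (hD : D.Nonempty)
    (hclosed : ∀ u ∈ D, ∀ z ∈ N u, z ∈ D) :
    D = Finset.univ := by
  apply Finset.eq_univ_of_forall
  intro v
  by_contra hv
  obtain ⟨u, hu, -⟩ := closest_in_C p N hnav hD
    (C := ∅) (fun u hu _ z hz => hclosed u hu z hz) v hv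
  exact absurd hu (Finset.notMem_empty u)

open Classical in
lemma absKey {X : Type*} [MetricSpace X] {n : ℕ} (p : Fin n → X)
    (N : Fin n → Finset (Fin n))
    (hnav : ∀ x y : Fin n, x ≠ y → ∃ z ∈ N x, dist (p z) (p y) < dist (p x) (p y))
    (q : X) (k : ℕ) :
    ∀ fuel (D C : Finset (Fin n)), D.Nonempty → C ⊆ D →
      (∀ u ∈ D, u ∉ C → ∀ z ∈ N u, z ∈ D) →
      n ≤ fuel + (D \ C).card →
      ∀ B ⊆ absRun N (fun i => dist q (p i)) k 2 fuel D C, B.card = k →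
      (∀ j ∈ B, ∀ v ∈ absRun N (fun i => dist q (p i)) k 2 fuel D C,
        v ∉ B → dist q (p j) ≤ dist q (p v)) →
      ∀ v : Fin n, v ∉ B → ∀ j ∈ B, dist q (p j) ≤ dist q (p v) := by
  set f : Fin n → ℝ := fun i => dist q (p i) with hf
  intro fuel
  induction fuel with
  | zero =>
    intro D C hD hCD hclosed hfuel B hBD hcard hB v hv j hj
    -- D \ C = univ, so v ∈ absRun ... = D
    have hDC : (D \ C) = Finset.univ := by
      apply Finset.eq_univ_of_card
      have := Finset.card_le_univ (D \ C)
      simp [Fintype.card_fin] at this ⊢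
      omega
    have hvD : v ∈ D := by
      have : v ∈ D \ C := hDC ▸ Finset.mem_univ v
      exact (Finset.mem_sdiff.mp this).1
    exact hB j hj v hvD hv
  | succ fuel ih =>
    intro D C hD hCD hclosed hfuel B hBD hcard hB v hv j hj
    by_cases hC : C.Nonempty
    · set x := pickMin f C hC with hx
      obtain ⟨hxC, hxmin⟩ := pickMin_spec f C hC
      by_cases hstop : (∃ S : Finset (Fin n), S ⊆ D ∧ S.card = k ∧
            ∀ j' ∈ S, (1 + 2) * f j' ≤ f x)
      · -- terminated: result = D
        have hres : absRun N f k 2 (fuel + 1) D C = D := by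
          rw [absRun_succ, dif_pos hC, if_pos hstop]
        rw [hres] at hBD hB
        by_cases hvD : v ∈ D
        · exact hB j hj v hvD hv
        · obtain ⟨S, hSD, hScard, hSle⟩ := hstop
          -- 3 * f j ≤ f x
          have h3 : (1 + 2) * f j ≤ f x := by
            by_cases hSB : S = B
            · exact hSle j (hSB ▸ hj)
            · have : ¬ S ⊆ B := fun hsub => hSB
                (Finset.eq_of_subset_of_card_le hsub (by omega))
              obtain ⟨s0, hs0S, hs0B⟩ := Finset.not_subset.mp this
              have h1 : f j ≤ f s0 := hB j hj s0 (hSD hs0S) hs0B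
              have h2 : (1 + 2) * f s0 ≤ f x := hSle s0 hs0S
              have hfj : (0:ℝ) ≤ f j := dist_nonneg
              nlinarith
          obtain ⟨u, huC, humin⟩ := closest_in_C p N hnav hD hclosed v hvD
          have hxu : f x ≤ f u := hxmin u huC
          have hjD : j ∈ D := hBD hj
          have h4 : dist (p u) (p v) ≤ dist (p j) (p v) := humin j hjD
          have h5 : dist q (p u) ≤ dist q (p v) + dist (p u) (p v) := by
            have := dist_triangle q (p v) (p u)
            rw [dist_comm (p v) (p u)] at this
            exact this
          have h6 : dist (p j) (p v) ≤ dist q (p j) + dist q (p v) := by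
            have := dist_triangle (p j) q (p v)
            rw [dist_comm (p j) q] at this
            exact this
          simp only [hf] at h3 hxu ⊢
          linarith
      · -- recurse
        have hres : absRun N f k 2 (fuel + 1) D C =
            absRun N f k 2 fuel (D ∪ N x) ((C.erase x) ∪ (N x \ D)) := by
          rw [absRun_succ, dif_pos hC, if_neg hstop]
        rw [hres] at hBD hB
        set D' := D ∪ N x with hD'
        set C' := (C.erase x) ∪ (N x \ D) with hC'
        have hsub : insert x (D \ C) ⊆ D' \ C' := by
          intro u hu
          rcases Finset.mem_insert.mp hu with rfl | hu
          · refine Finset.mem_sdiff.mpr ⟨Finset.mem_union_left _ (hCD hxC), ?_⟩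
            simp only [hC', Finset.mem_union, Finset.mem_erase, Finset.mem_sdiff]
            push_neg
            exact ⟨fun h => absurd rfl h, fun _ => hCD hxC⟩
          · obtain ⟨huD, huC⟩ := Finset.mem_sdiff.mp hu
            refine Finset.mem_sdiff.mpr ⟨Finset.mem_union_left _ huD, ?_⟩
            simp only [hC', Finset.mem_union, Finset.mem_erase, Finset.mem_sdiff]
            push_neg
            exact ⟨fun _ => huC, fun _ => huD⟩
        have hcard' : (D \ C).card + 1 ≤ (D' \ C').card := by
          have hxnot : x ∉ D \ C := fun h => (Finset.mem_sdiff.mp h).2 hxC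
          calc (D \ C).card + 1 = (insert x (D \ C)).card :=
                (Finset.card_insert_of_notMem hxnot).symm
            _ ≤ (D' \ C').card := Finset.card_le_card hsub
        refine ih D' C' (hD.mono Finset.subset_union_left) ?_ ?_ (by omega) B hBD hcard hB v hv j hj
        · intro u hu
          rcases Finset.mem_union.mp hu with hu | hu
          · exact Finset.mem_union_left _ ((Finset.erase_subset _ _).trans hCD hu)
          · exact Finset.mem_union_right _ (Finset.mem_sdiff.mp hu).1
        · intro u huD' huC' z hz
          rcases Finset.mem_union.mp huD' with huD | huN
          · by_cases hux : u = x
            · subst hux; exact Finset.mem_union_right _ hz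
            · have huC : u ∉ C := fun h => huC'
                (Finset.mem_union_left _ (Finset.mem_erase.mpr ⟨hux, h⟩))
              exact Finset.mem_union_left _ (hclosed u huD huC z hz)
          · by_cases huD : u ∈ D
            · by_cases hux : u = x
              · subst hux; exact Finset.mem_union_right _ hz
              · have huC : u ∉ C := fun h => huC'
                  (Finset.mem_union_left _ (Finset.mem_erase.mpr ⟨hux, h⟩))
                exact Finset.mem_union_left _ (hclosed u huD huC z hz)
            · exact absurd (Finset.mem_union_right _
                (Finset.mem_sdiff.mpr ⟨huN, huD⟩)) huC'
    · -- C empty: result = D, and D = univ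
      have hres : absRun N f k 2 (fuel + 1) D C = D := by
        rw [absRun_succ, dif_neg hC]
      rw [hres] at hBD hB
      have hCe : C = ∅ := Finset.not_nonempty_iff_eq_empty.mp hC
      have hDu : D = Finset.univ := by
        apply closed_univ p N hnav hD
        intro u hu z hz
        exact hclosed u hu (by simp [hCe]) z hz
      exact hB j hj v (hDu ▸ Finset.mem_univ v) hv

/-- Adaptive Beam Search with `γ = 2` on a navigable graph returns the
exact `k` nearest neighbors: if `B` is the set of `k` closest discovered nodes at
termination, every node `v ∉ B` satisfies `d(q,v) ≥ max_{j ∈ B} d(q,j)`. -/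
theorem stmt12 {X : Type*} [MetricSpace X] {n : ℕ} (p : Fin n → X)
    (hinj : Function.Injective p)
    (N : Fin n → Finset (Fin n))
    (hnav : ∀ x y : Fin n, x ≠ y → ∃ z ∈ N x, dist (p z) (p y) < dist (p x) (p y))
    (q : X) (k : ℕ) (hk : 1 ≤ k) (s : Fin n)
    (B : Finset (Fin n))
    (hBD : B ⊆ absRun N (fun i => dist q (p i)) k 2 n {s} {s})
    (hcard : B.card = k)
    (hB : ∀ j ∈ B, ∀ v ∈ absRun N (fun i => dist q (p i)) k 2 n {s} {s},
      v ∉ B → dist q (p j) ≤ dist q (p v)) :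
    ∀ v : Fin n, v ∉ B → ∀ j ∈ B, dist q (p j) ≤ dist q (p v) := by
  exact absKey p N hnav q k n {s} {s} (Finset.singleton_nonempty s)
    (Finset.Subset.refl _) (by simp) (by simp) B hBD hcard hB
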